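/- Let G = (V,E) be a finite simple graph admitting a k-completion, and suppose G is sunflower-reduced. Then: (i) the claws of G have at most k^2 pairwise distinct leaf sets; (ii) at most k^2 + 2k vertices of G are leaves of claws of G; and (iii) at most 2k^2 + 2k vertices of G belong to induced 4-cycles of G. -/

import Mathlib

open SimpleGraph Finset

variable {V : Type*}

/-- `f` is an (injective, hence linear) umbrella ordering of the graph `G`. -/
def IsUmbrellaOrdering (G : SimpleGraph V) (f : V → ℕ) : Prop :=
  Function.Injective f ∧
    ∀ u v w : V, f u < f v → f v < f w → G.Adj u w → G.Adj u v ∧ G.Adj v w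

/-- A graph is a proper interval graph iff it admits an umbrella ordering. -/
def IsProperIntervalGraph (G : SimpleGraph V) : Prop :=
  ∃ f : V → ℕ, IsUmbrellaOrdering G f

/-- The graph `G + F` obtained by adding the set `F` of pairs as edges. -/
def addEdges (G : SimpleGraph V) (F : Finset (Sym2 V)) : SimpleGraph V :=
  G ⊔ SimpleGraph.fromEdgeSet ↑F

/-- `F` is a completion of `G`: a set of non-loop non-edges whose addition
makes `G` a proper interval graph. -/
def IsCompletion (G : SimpleGraph V) (F : Finset (Sym2 V)) : Prop :=
  (∀ e ∈ F, ¬ e.IsDiag) ∧ (∀ e ∈ F, e ∉ G.edgeSet) ∧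
    IsProperIntervalGraph (addEdges G F)

/-- `F` is a `k`-completion of `G`. -/
def IsKCompletion (G : SimpleGraph V) (k : ℕ) (F : Finset (Sym2 V)) : Prop :=
  IsCompletion G F ∧ F.card ≤ k

/-- `uv` is an extremal edge of `G` with respect to the ordering `f`. -/
def IsExtremalEdge (G : SimpleGraph V) (f : V → ℕ) (u v : V) : Prop :=
  G.Adj u v ∧ f u < f v ∧
    ∀ u' v' : V, G.Adj u' v' → f u' ≤ f u → f v ≤ f v' → u' = u ∧ v' = v

/-- `c` is the center and `l₁, l₂, l₃` the leaves of an induced claw of `G`. -/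
def IsClaw (G : SimpleGraph V) (c l₁ l₂ l₃ : V) : Prop :=
  G.Adj c l₁ ∧ G.Adj c l₂ ∧ G.Adj c l₃ ∧
    ¬ G.Adj l₁ l₂ ∧ ¬ G.Adj l₁ l₃ ∧ ¬ G.Adj l₂ l₃ ∧ l₁ ≠ l₂ ∧ l₁ ≠ l₃ ∧ l₂ ≠ l₃

/-- `a b c d` is an induced 4-cycle of `G` (in this cyclic order). -/
def IsInducedC4 (G : SimpleGraph V) (a b c d : V) : Prop :=
  G.Adj a b ∧ G.Adj b c ∧ G.Adj c d ∧ G.Adj d a ∧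
    ¬ G.Adj a c ∧ ¬ G.Adj b d ∧ a ≠ c ∧ b ≠ d

/-- `x` belongs to some claw of `G` (as center or leaf). -/
def InClaw (G : SimpleGraph V) (x : V) : Prop :=
  ∃ a b c d, IsClaw G a b c d ∧ (x = a ∨ x = b ∨ x = c ∨ x = d)

/-- `x` belongs to some induced 4-cycle of `G`. -/
def InC4 (G : SimpleGraph V) (x : V) : Prop :=
  ∃ a b c d, IsInducedC4 G a b c d ∧ (x = a ∨ x = b ∨ x = c ∨ x = d)

/-- `{x, y, z}` is an independent set of size 3 (a `3K₁`) of `G`. -/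
def IsInd3 (G : SimpleGraph V) (x y z : V) : Prop :=
  x ≠ y ∧ x ≠ z ∧ y ≠ z ∧ ¬ G.Adj x y ∧ ¬ G.Adj x z ∧ ¬ G.Adj y z

/-- `x` belongs to some independent set of size 3 of `G`. -/
def InInd3 (G : SimpleGraph V) (x : V) : Prop := ∃ y z, IsInd3 G x y z

/-- `G` is sunflower-reduced (for the parameter `k`). -/
def SunflowerReduced (G : SimpleGraph V) (k : ℕ) : Prop :=
  ∀ u v : V, u ≠ v → ¬ G.Adj u v →
    {w : V | ∃ c, IsClaw G c u v w}.ncard ≤ k ∧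
    {e : Sym2 V | ∃ a b, e = s(a, b) ∧ IsInducedC4 G u a v b}.ncard ≤ k

/-- `u` and `v` are true twins of `G`: they have the same closed neighborhood. -/
def TrueTwins (G : SimpleGraph V) (u v : V) : Prop :=
  insert u (G.neighborSet u) = insert v (G.neighborSet v)

/-- `b : Fin p → V` enumerates a `K`-join of `G` whose complement is
partitioned into `N`, `L`, `R`, `C`. -/
structure KJoinWith (G : SimpleGraph V) {p : ℕ} (b : Fin p → V)
    (N L R C : Set V) : Prop where
  inj : Function.Injective b
  clique : ∀ i j : Fin p, i ≠ j → G.Adj (b i) (b j)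
  cover : ∀ v : V, v ∉ Set.range b → v ∈ N ∪ L ∪ R ∪ C
  disj : List.Pairwise Disjoint [Set.range b, N, L, R, C]
  nAdj : ∀ v ∈ N, ∀ i, G.Adj v (b i)
  cNotAdj : ∀ v ∈ C, ∀ i, ¬ G.Adj v (b i)
  lrAdj : ∀ v ∈ L ∪ R, ∃ i, G.Adj v (b i)
  lrNotAll : ∀ v ∈ L ∪ R, ∃ i, ¬ G.Adj v (b i)
  rFirst : ∀ r ∈ R, ∀ i : Fin p, i.val = 0 → ¬ G.Adj r (b i)
  lLast : ∀ x ∈ L, ∀ i : Fin p, i.val = p - 1 → ¬ G.Adj x (b i)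
  rMono : ∀ i j : Fin p, i.val + 1 = j.val → ∀ r ∈ R, G.Adj (b i) r → G.Adj (b j) r
  lMono : ∀ i j : Fin p, i.val + 1 = j.val → ∀ x ∈ L, G.Adj (b j) x → G.Adj (b i) x

/-- `B ⊆ V` is a `K`-join of `G`. -/
def IsKJoin (G : SimpleGraph V) (B : Set V) : Prop :=
  ∃ (p : ℕ) (b : Fin p → V) (N L R C : Set V),
    Set.range b = B ∧ KJoinWith G b N L R C

/-- `B` is a clean `K`-join: none of its vertices belongs to a claw or an
induced 4-cycle of `G`. -/
def IsCleanKJoin (G : SimpleGraph V) (B : Set V) : Prop :=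
  IsKJoin G B ∧ ∀ x ∈ B, ¬ InClaw G x ∧ ¬ InC4 G x

/-- `B ⊆ V` is a simple `K`-join of `G` (one of `L`, `R` is empty). -/
def IsSimpleKJoin (G : SimpleGraph V) (B : Set V) : Prop :=
  ∃ (p : ℕ) (b : Fin p → V) (N L R C : Set V),
    Set.range b = B ∧ KJoinWith G b N L R C ∧ (L = ∅ ∨ R = ∅)

/-- `B` is bcc-clean: none of its vertices belongs to a `3K₁` or an induced
4-cycle of `G`. -/
def IsBccClean (G : SimpleGraph V) (B : Set V) : Prop :=
  ∀ x ∈ B, ¬ InInd3 G x ∧ ¬ InC4 G x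

/-- `b : Fin p → V` enumerates (in umbrella order) a 1-branch of `G` with
complement partitioned into `R`, `C`; `b l` is the neighbor of the last
vertex `b (p-1)` of minimal index.  The attachment clique is
`B₁ = {b i : l ≤ i}` and `B^R = {b i : i < l}`. -/
structure OneBranch (G : SimpleGraph V) {p : ℕ} (b : Fin p → V)
    (R C : Set V) (l : Fin p) : Prop where
  pos : 0 < p
  inj : Function.Injective b
  umbrella : ∀ i j m : Fin p, i < j → j < m → G.Adj (b i) (b m) →
    G.Adj (b i) (b j) ∧ G.Adj (b j) (b m)
  connB : (G.induce (Set.range b)).Connected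
  cover : ∀ v : V, v ∉ Set.range b → v ∈ R ∪ C
  disj : List.Pairwise Disjoint [Set.range b, R, C]
  noBC : ∀ v ∈ C, ∀ i, ¬ G.Adj v (b i)
  rNbr : ∀ v ∈ R, ∃ i, G.Adj v (b i)
  lMin : ∀ j : Fin p, j < l → ¬ G.Adj (b j) (b ⟨p - 1, Nat.sub_lt pos Nat.one_pos⟩)
  lNbr : l.val = p - 1 ∨ G.Adj (b l) (b ⟨p - 1, Nat.sub_lt pos Nat.one_pos⟩)
  noEarlyR : ∀ j : Fin p, j < l → ∀ r ∈ R, ¬ G.Adj r (b j)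
  rMono : ∀ i j : Fin p, l ≤ i → i.val + 1 = j.val → ∀ r ∈ R,
    G.Adj (b i) r → G.Adj (b j) r

/-- `b : Fin p → V` enumerates (in umbrella order) a 2-branch of `G` with
complement partitioned into `L`, `R`, `C`; `b l` is the neighbor of `b (p-1)`
of minimal index and `b l'` is the neighbor of `b 0` of maximal index.  The
attachment cliques are `B₁ = {b i : i ≤ l'}` and `B₂ = {b i : l ≤ i}`, and
`B^R = {b i : l' < i < l}`. -/
structure TwoBranch (G : SimpleGraph V) {p : ℕ} (b : Fin p → V)
    (L R C : Set V) (l l' : Fin p) : Prop where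
  pos : 0 < p
  inj : Function.Injective b
  umbrella : ∀ i j m : Fin p, i < j → j < m → G.Adj (b i) (b m) →
    G.Adj (b i) (b j) ∧ G.Adj (b j) (b m)
  connB : (G.induce (Set.range b)).Connected
  cover : ∀ v : V, v ∉ Set.range b → v ∈ L ∪ R ∪ C
  disj : List.Pairwise Disjoint [Set.range b, L, R, C]
  noBC : ∀ v ∈ C, ∀ i, ¬ G.Adj v (b i)
  lNbrEx : ∀ v ∈ L, ∃ i, G.Adj v (b i)
  rNbrEx : ∀ v ∈ R, ∃ i, G.Adj v (b i)
  lMin : ∀ j : Fin p, j < l → ¬ G.Adj (b j) (b ⟨p - 1, Nat.sub_lt pos Nat.one_pos⟩)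
  lNbr : l.val = p - 1 ∨ G.Adj (b l) (b ⟨p - 1, Nat.sub_lt pos Nat.one_pos⟩)
  lMax' : ∀ j : Fin p, l' < j → ¬ G.Adj (b ⟨0, pos⟩) (b j)
  lNbr' : l'.val = 0 ∨ G.Adj (b ⟨0, pos⟩) (b l')
  noEarlyR : ∀ j : Fin p, j < l → ∀ r ∈ R, ¬ G.Adj r (b j)
  noLateL : ∀ j : Fin p, l' < j → ∀ v ∈ L, ¬ G.Adj v (b j)
  rMono : ∀ i j : Fin p, l ≤ i → i.val + 1 = j.val → ∀ r ∈ R,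
    G.Adj (b i) r → G.Adj (b j) r
  lMono : ∀ i j : Fin p, j ≤ l' → i.val + 1 = j.val → ∀ v ∈ L,
    G.Adj (b j) v → G.Adj (b i) v

/-- `e : Fin q → Fin p` lists the last indices of the `q` K-joins of the
K-join decomposition of the 2-branch enumerated by `b` (with attachment
cliques ending at `l'` resp. starting at `l`). -/
def KJoinDecomp (G : SimpleGraph V) {p : ℕ} (b : Fin p → V) (l l' : Fin p)
    (q : ℕ) (e : Fin q → Fin p) : Prop :=
  0 < q ∧
  (∀ i : Fin q, i.val = 0 → e i = l') ∧
  (∀ i : Fin q, i.val = q - 1 → (e i).val = p - 1) ∧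
  StrictMono e ∧
  ∀ i j : Fin q, i.val + 1 = j.val →
    ∃ hs : (e i).val + 1 < p,
      (j.val + 1 < q →
        (⟨(e i).val + 1, hs⟩ : Fin p) < l ∧
        G.Adj (b ⟨(e i).val + 1, hs⟩) (b (e j)) ∧
        ∀ m : Fin p, G.Adj (b ⟨(e i).val + 1, hs⟩) (b m) → m ≤ e j) ∧
      (j.val + 1 = q → l ≤ (⟨(e i).val + 1, hs⟩ : Fin p))

/-- `G` is a bi-clique chain graph: two cliques joined by a join. -/
def IsBicliqueChain (G : SimpleGraph V) : Prop :=
  ∃ (q : ℕ) (x : Fin q → V) (Y : Set V),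
    Function.Injective x ∧
    Disjoint (Set.range x) Y ∧
    (∀ v : V, v ∈ Set.range x ∨ v ∈ Y) ∧
    (∀ i j : Fin q, i ≠ j → G.Adj (x i) (x j)) ∧
    G.IsClique Y ∧
    (∀ i j : Fin q, i ≤ j → ∀ y ∈ Y, G.Adj (x i) y → G.Adj (x j) y)

/-- `F` is a bcc-`k`-completion of `G`. -/
def IsBccKCompletion (G : SimpleGraph V) (k : ℕ) (F : Finset (Sym2 V)) : Prop :=
  (∀ e ∈ F, ¬ e.IsDiag) ∧ (∀ e ∈ F, e ∉ G.edgeSet) ∧ F.card ≤ k ∧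
    IsBicliqueChain (addEdges G F)

section AuxFewClaws

variable {G : SimpleGraph V}

private lemma sym2_rep (e : Sym2 V) : ∃ u v : V, e = s(u, v) :=
  Sym2.ind (fun u v => ⟨u, v, rfl⟩) e

private instance sym2Finite [Finite V] : Finite (Sym2 V) :=
  Finite.of_surjective (fun p : V × V => s(p.1, p.2)) (fun e => by
    obtain ⟨u, v, rfl⟩ := sym2_rep e; exact ⟨(u, v), rfl⟩)

private lemma aux_biUnion_le {ι α : Type*} (s : Finset ι) (A : ι → Set α) :
    (⋃ i ∈ s, A i).ncard ≤ ∑ i ∈ s, (A i).ncard := by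
  classical
  induction s using Finset.induction_on with
  | empty => simp
  | insert a s ha ih =>
    rw [Finset.sum_insert ha, Finset.set_biUnion_insert]
    exact (Set.ncard_union_le _ _).trans (Nat.add_le_add_left ih _)

private lemma fork_above {f : V → ℕ} (hf : IsUmbrellaOrdering G f) {x y z : V}
    (hxy : G.Adj x y) (hxz : G.Adj x z) (hyz : ¬ G.Adj y z) (hne : y ≠ z)
    (h1 : f x < f y) (h2 : f x < f z) : False := by
  have hfne : f y ≠ f z := fun h => hne (hf.1 h)
  rcases hfne.lt_or_gt with h | h
  · exact hyz (hf.2 x y z h1 h hxz).2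
  · exact hyz ((hf.2 x z y h2 h hxy).2).symm

private lemma fork_below {f : V → ℕ} (hf : IsUmbrellaOrdering G f) {x y z : V}
    (hxy : G.Adj x y) (hxz : G.Adj x z) (hyz : ¬ G.Adj y z) (hne : y ≠ z)
    (h1 : f y < f x) (h2 : f z < f x) : False := by
  have hfne : f y ≠ f z := fun h => hne (hf.1 h)
  rcases hfne.lt_or_gt with h | h
  · exact hyz (hf.2 y z x h h2 hxy.symm).1
  · exact hyz ((hf.2 z y x h h1 hxz.symm).1).symm

private lemma no_claw {f : V → ℕ} (hf : IsUmbrellaOrdering G f) {c l₁ l₂ l₃ : V}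
    (h : IsClaw G c l₁ l₂ l₃) : False := by
  obtain ⟨h1, h2, h3, n12, n13, n23, d12, d13, d23⟩ := h
  have e1 : f c ≠ f l₁ := fun he => h1.ne (hf.1 he)
  have e2 : f c ≠ f l₂ := fun he => h2.ne (hf.1 he)
  have e3 : f c ≠ f l₃ := fun he => h3.ne (hf.1 he)
  rcases e1.lt_or_gt with a1 | a1 <;> rcases e2.lt_or_gt with a2 | a2 <;>
    rcases e3.lt_or_gt with a3 | a3
  exacts [fork_above hf h1 h2 n12 d12 a1 a2, fork_above hf h1 h2 n12 d12 a1 a2,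
    fork_above hf h1 h3 n13 d13 a1 a3, fork_below hf h2 h3 n23 d23 a2 a3,
    fork_above hf h2 h3 n23 d23 a2 a3, fork_below hf h1 h3 n13 d13 a1 a3,
    fork_below hf h1 h2 n12 d12 a1 a2, fork_below hf h1 h2 n12 d12 a1 a2]

private lemma claw_swap12 {c l₁ l₂ l₃ : V} (h : IsClaw G c l₁ l₂ l₃) :
    IsClaw G c l₂ l₁ l₃ := by
  obtain ⟨h1, h2, h3, n12, n13, n23, d12, d13, d23⟩ := h
  exact ⟨h2, h1, h3, fun h' => n12 h'.symm, n23, n13, d12.symm, d23, d13⟩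

private lemma claw_rot {c l₁ l₂ l₃ : V} (h : IsClaw G c l₁ l₂ l₃) :
    IsClaw G c l₂ l₃ l₁ := by
  obtain ⟨h1, h2, h3, n12, n13, n23, d12, d13, d23⟩ := h
  exact ⟨h2, h3, h1, n23, fun h' => n12 h'.symm, fun h' => n13 h'.symm,
    d23, d12.symm, d13.symm⟩

private lemma claw_swap23 {c l₁ l₂ l₃ : V} (h : IsClaw G c l₁ l₂ l₃) :
    IsClaw G c l₁ l₃ l₂ := claw_rot (claw_swap12 h)

private lemma c4_rot {a b c d : V} (h : IsInducedC4 G a b c d) :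
    IsInducedC4 G b c d a := by
  obtain ⟨ab, bc, cd, da, nac, nbd, hac, hbd⟩ := h
  exact ⟨bc, cd, da, ab, nbd, fun h' => nac h'.symm, hbd, hac.symm⟩

private lemma no_c4 {f : V → ℕ} (hf : IsUmbrellaOrdering G f) {a b c d : V}
    (h : IsInducedC4 G a b c d) : False := by
  have key : ∀ x y z w : V, IsInducedC4 G x y z w → f x < f y → f x < f w → False := by
    intro x y z w hx h1 h2
    exact fork_above hf hx.1 hx.2.2.2.1.symm hx.2.2.2.2.2.1 hx.2.2.2.2.2.2.2 h1 h2
  obtain ⟨ab, bc, cd, da, nac, nbd, hac, hbd⟩ := h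
  have h4 : IsInducedC4 G a b c d := ⟨ab, bc, cd, da, nac, nbd, hac, hbd⟩
  have i1 : f a ≠ f b := fun he => ab.ne (hf.1 he)
  have i2 : f b ≠ f c := fun he => bc.ne (hf.1 he)
  have i3 : f c ≠ f d := fun he => cd.ne (hf.1 he)
  have i4 : f d ≠ f a := fun he => da.ne (hf.1 he)
  have i5 : f a ≠ f c := fun he => hac (hf.1 he)
  have i6 : f b ≠ f d := fun he => hbd (hf.1 he)
  have hcase : (f a < f b ∧ f a < f d) ∨ (f b < f c ∧ f b < f a) ∨
      (f c < f d ∧ f c < f b) ∨ (f d < f a ∧ f d < f c) := by omega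
  rcases hcase with ⟨p, q⟩ | ⟨p, q⟩ | ⟨p, q⟩ | ⟨p, q⟩
  · exact key a b c d h4 p q
  · exact key b c d a (c4_rot h4) p q
  · exact key c d a b (c4_rot (c4_rot h4)) p q
  · exact key d a b c (c4_rot (c4_rot (c4_rot h4))) p q

private lemma addEdges_adj {F : Finset (Sym2 V)} {x y : V} :
    (addEdges G F).Adj x y ↔ G.Adj x y ∨ (s(x, y) ∈ F ∧ x ≠ y) := by
  simp [addEdges, SimpleGraph.fromEdgeSet_adj]

private lemma claw_pair_mem {F : Finset (Sym2 V)}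
    (hPI : IsProperIntervalGraph (addEdges G F)) {c l₁ l₂ l₃ : V}
    (h : IsClaw G c l₁ l₂ l₃) :
    s(l₁, l₂) ∈ F ∨ s(l₁, l₃) ∈ F ∨ s(l₂, l₃) ∈ F := by
  by_contra hc
  push_neg at hc
  obtain ⟨m12, m13, m23⟩ := hc
  obtain ⟨f, hf⟩ := hPI
  obtain ⟨h1, h2, h3, n12, n13, n23, d12, d13, d23⟩ := h
  refine no_claw hf (G := addEdges G F) (c := c)
    ⟨addEdges_adj.mpr (Or.inl h1), addEdges_adj.mpr (Or.inl h2),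
      addEdges_adj.mpr (Or.inl h3), ?_, ?_, ?_, d12, d13, d23⟩
  · intro h'; rcases addEdges_adj.mp h' with h'' | ⟨h'', _⟩
    exacts [n12 h'', m12 h'']
  · intro h'; rcases addEdges_adj.mp h' with h'' | ⟨h'', _⟩
    exacts [n13 h'', m13 h'']
  · intro h'; rcases addEdges_adj.mp h' with h'' | ⟨h'', _⟩
    exacts [n23 h'', m23 h'']

private lemma c4_pair_mem {F : Finset (Sym2 V)}
    (hPI : IsProperIntervalGraph (addEdges G F)) {a b c d : V}
    (h : IsInducedC4 G a b c d) : s(a, c) ∈ F ∨ s(b, d) ∈ F := by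
  by_contra hc
  push_neg at hc
  obtain ⟨m1, m2⟩ := hc
  obtain ⟨f, hf⟩ := hPI
  obtain ⟨ab, bc, cd, da, nac, nbd, hac, hbd⟩ := h
  refine no_c4 hf (G := addEdges G F)
    ⟨addEdges_adj.mpr (Or.inl ab), addEdges_adj.mpr (Or.inl bc),
      addEdges_adj.mpr (Or.inl cd), addEdges_adj.mpr (Or.inl da), ?_, ?_, hac, hbd⟩
  · intro h'; rcases addEdges_adj.mp h' with h'' | ⟨h'', _⟩
    exacts [nac h'', m1 h'']
  · intro h'; rcases addEdges_adj.mp h' with h'' | ⟨h'', _⟩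
    exacts [nbd h'', m2 h'']

private lemma ncard_mem_sym2_le [Finite V] (e : Sym2 V) : {x : V | x ∈ e}.ncard ≤ 2 := by
  obtain ⟨u, v, rfl⟩ := sym2_rep e
  have h : {x : V | x ∈ s(u, v)} = {u, v} := by
    ext x; simp [Sym2.mem_iff]
  rw [h]
  exact (Set.ncard_insert_le u {v}).trans (by simp)

/-- The third-leaf set attached to a pair encoded as `e`. -/
private def clawW (G : SimpleGraph V) (e : Sym2 V) : Set V :=
  {w | ∃ u v c, e = s(u, v) ∧ IsClaw G c u v w}

/-- Leaf sets of claws whose `F`-pair is `e`. -/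
private def clawLS (G : SimpleGraph V) (e : Sym2 V) : Set (Set V) :=
  {S | ∃ u v w, e = s(u, v) ∧ (∃ c, IsClaw G c u v w) ∧ S = {u, v, w}}

/-- Second diagonals of induced 4-cycles with diagonal `e`. -/
private def c4D (G : SimpleGraph V) (e : Sym2 V) : Set (Sym2 V) :=
  {e' | ∃ u v x y, e = s(u, v) ∧ e' = s(x, y) ∧ IsInducedC4 G u x v y}

private def c4DV (G : SimpleGraph V) (e : Sym2 V) : Set V :=
  {x | ∃ e' ∈ c4D G e, x ∈ e'}

private lemma clawW_le [Finite V] {k : ℕ} (hred : SunflowerReduced G k) {u v : V}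
    (hu : u ≠ v) (hn : ¬ G.Adj u v) : (clawW G s(u, v)).ncard ≤ k := by
  refine le_trans (Set.ncard_le_ncard ?_ (Set.toFinite _)) ((hred u v hu hn).1)
  rintro w ⟨u', v', c, heq, hclaw⟩
  rcases Sym2.eq_iff.mp heq with ⟨rfl, rfl⟩ | ⟨rfl, rfl⟩
  · exact ⟨c, hclaw⟩
  · exact ⟨c, claw_swap12 hclaw⟩

private lemma clawLS_le [Finite V] {k : ℕ} (hred : SunflowerReduced G k) {u v : V}
    (hu : u ≠ v) (hn : ¬ G.Adj u v) : (clawLS G s(u, v)).ncard ≤ k := by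
  have himg : clawLS G s(u, v) ⊆
      (fun w => ({u, v, w} : Set V)) '' {w | ∃ c, IsClaw G c u v w} := by
    rintro S ⟨u', v', w, heq, ⟨c, hclaw⟩, rfl⟩
    rcases Sym2.eq_iff.mp heq with ⟨rfl, rfl⟩ | ⟨rfl, rfl⟩
    · exact ⟨w, ⟨c, hclaw⟩, rfl⟩
    · exact ⟨w, ⟨c, claw_swap12 hclaw⟩, by exact Set.insert_comm u v {w}⟩
  refine le_trans (Set.ncard_le_ncard himg (Set.toFinite _)) ?_
  exact le_trans (Set.ncard_image_le (Set.toFinite _)) ((hred u v hu hn).1)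

private lemma c4D_le [Finite V] {k : ℕ} (hred : SunflowerReduced G k) {u v : V}
    (hu : u ≠ v) (hn : ¬ G.Adj u v) : (c4D G s(u, v)).ncard ≤ k := by
  refine le_trans (Set.ncard_le_ncard ?_ (Set.toFinite _)) ((hred u v hu hn).2)
  rintro e' ⟨u', v', x, y, heq, rfl, hc4⟩
  rcases Sym2.eq_iff.mp heq with ⟨rfl, rfl⟩ | ⟨rfl, rfl⟩
  · exact ⟨x, y, rfl, hc4⟩
  · exact ⟨y, x, Sym2.eq_swap, c4_rot (c4_rot hc4)⟩

private lemma c4DV_le [Finite V] {k : ℕ} (hred : SunflowerReduced G k) {u v : V}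
    (hu : u ≠ v) (hn : ¬ G.Adj u v) : (c4DV G s(u, v)).ncard ≤ 2 * k := by
  have hfin : (c4D G s(u, v)).Finite := Set.toFinite _
  have hsub : c4DV G s(u, v) ⊆ ⋃ e' ∈ hfin.toFinset, {x : V | x ∈ e'} := by
    rintro x ⟨e', he', hx⟩
    exact Set.mem_biUnion (hfin.mem_toFinset.mpr he') hx
  have h1 := aux_biUnion_le hfin.toFinset (fun e' => {x : V | x ∈ e'})
  have h2 : ∑ e' ∈ hfin.toFinset, ({x : V | x ∈ e'} : Set V).ncard ≤
      ∑ _e' ∈ hfin.toFinset, 2 :=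
    Finset.sum_le_sum (fun e' _ => ncard_mem_sym2_le e')
  have h3 : hfin.toFinset.card = (c4D G s(u, v)).ncard :=
    (Set.ncard_eq_toFinset_card _ hfin).symm
  have h4 := c4D_le hred hu hn
  have h5 := Set.ncard_le_ncard hsub (Set.toFinite _)
  rw [Finset.sum_const, smul_eq_mul] at h2
  omega

end AuxFewClaws
/-- In a sunflower-reduced positive instance: at most `k²` distinct leaf sets
of claws, at most `k² + 2k` vertices are leaves of claws, and at most
`2k² + 2k` vertices belong to induced 4-cycles. -/
theorem few_claws_and_c4 [Fintype V] (G : SimpleGraph V) (k : ℕ)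
    (hpos : ∃ F : Finset (Sym2 V), IsKCompletion G k F)
    (hred : SunflowerReduced G k) :
    {S : Set V | ∃ c l₁ l₂ l₃ : V, IsClaw G c l₁ l₂ l₃ ∧
        S = {l₁, l₂, l₃}}.ncard ≤ k ^ 2 ∧
    {w : V | ∃ c l₂ l₃ : V, IsClaw G c w l₂ l₃}.ncard ≤ k ^ 2 + 2 * k ∧
    {x : V | InC4 G x}.ncard ≤ 2 * k ^ 2 + 2 * k := by
  classical
  obtain ⟨F, ⟨hdiag, hned, hPI⟩, hFcard⟩ := hpos
  have hrep : ∀ e ∈ F, ∃ u v : V, e = s(u, v) ∧ u ≠ v ∧ ¬ G.Adj u v := by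
    intro e he
    obtain ⟨u, v, rfl⟩ := sym2_rep e
    refine ⟨u, v, rfl, ?_, ?_⟩
    · intro h; exact hdiag _ he (Sym2.mk_isDiag_iff.mpr h)
    · intro h; exact hned _ he (G.mem_edgeSet.mpr h)
  -- endpoints of F-edges
  have hEPU : (⋃ e ∈ F, {x : V | x ∈ e}).ncard ≤ 2 * k := by
    refine le_trans (Set.ncard_le_ncard Set.Subset.rfl (Set.toFinite _)) ?_
    refine le_trans (aux_biUnion_le F _) ?_
    refine le_trans (Finset.sum_le_sum fun e _ => ncard_mem_sym2_le e) ?_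
    rw [Finset.sum_const, smul_eq_mul]
    omega
  -- part (i)
  have hsub1 : {S : Set V | ∃ c l₁ l₂ l₃ : V, IsClaw G c l₁ l₂ l₃ ∧
      S = {l₁, l₂, l₃}} ⊆ ⋃ e ∈ F, clawLS G e := by
    rintro S ⟨c, l₁, l₂, l₃, hclaw, rfl⟩
    rcases claw_pair_mem hPI hclaw with hm | hm | hm
    · exact Set.mem_biUnion hm ⟨l₁, l₂, l₃, rfl, ⟨c, hclaw⟩, rfl⟩
    · refine Set.mem_biUnion hm ⟨l₁, l₃, l₂, rfl, ⟨c, claw_swap23 hclaw⟩, ?_⟩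
      rw [Set.pair_comm l₂ l₃]
    · refine Set.mem_biUnion hm ⟨l₂, l₃, l₁, rfl, ⟨c, claw_rot hclaw⟩, ?_⟩
      rw [Set.insert_comm l₁ l₂, Set.pair_comm l₁ l₃]
  have hLSb : ∑ e ∈ F, (clawLS G e).ncard ≤ k * k := by
    have h : ∑ e ∈ F, (clawLS G e).ncard ≤ ∑ _e ∈ F, k :=
      Finset.sum_le_sum (fun e he => by
        obtain ⟨u, v, rfl, hu, hn⟩ := hrep e he
        exact clawLS_le hred hu hn)
    rw [Finset.sum_const, smul_eq_mul] at h
    exact h.trans (Nat.mul_le_mul hFcard le_rfl)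
  have part1 : {S : Set V | ∃ c l₁ l₂ l₃ : V, IsClaw G c l₁ l₂ l₃ ∧
      S = {l₁, l₂, l₃}}.ncard ≤ k ^ 2 := by
    calc _ ≤ (⋃ e ∈ F, clawLS G e).ncard :=
            Set.ncard_le_ncard hsub1 (Set.toFinite _)
      _ ≤ ∑ e ∈ F, (clawLS G e).ncard := aux_biUnion_le F _
      _ ≤ k * k := hLSb
      _ = k ^ 2 := (pow_two k).symm
  -- part (ii)
  have hsub2 : {w : V | ∃ c l₂ l₃ : V, IsClaw G c w l₂ l₃} ⊆
      (⋃ e ∈ F, {x : V | x ∈ e}) ∪ ⋃ e ∈ F, clawW G e := by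
    rintro w ⟨c, l₂, l₃, hclaw⟩
    rcases claw_pair_mem hPI hclaw with hm | hm | hm
    · exact Or.inl (Set.mem_biUnion hm (Sym2.mem_mk_left w l₂))
    · exact Or.inl (Set.mem_biUnion hm (Sym2.mem_mk_left w l₃))
    · exact Or.inr (Set.mem_biUnion hm ⟨l₂, l₃, c, rfl, claw_rot hclaw⟩)
  have hWb : ∑ e ∈ F, (clawW G e).ncard ≤ k * k := by
    have h : ∑ e ∈ F, (clawW G e).ncard ≤ ∑ _e ∈ F, k :=
      Finset.sum_le_sum (fun e he => by
        obtain ⟨u, v, rfl, hu, hn⟩ := hrep e he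
        exact clawW_le hred hu hn)
    rw [Finset.sum_const, smul_eq_mul] at h
    exact h.trans (Nat.mul_le_mul hFcard le_rfl)
  have part2 : {w : V | ∃ c l₂ l₃ : V, IsClaw G c w l₂ l₃}.ncard ≤ k ^ 2 + 2 * k := by
    calc _ ≤ ((⋃ e ∈ F, {x : V | x ∈ e}) ∪ ⋃ e ∈ F, clawW G e).ncard :=
            Set.ncard_le_ncard hsub2 (Set.toFinite _)
      _ ≤ (⋃ e ∈ F, {x : V | x ∈ e}).ncard + (⋃ e ∈ F, clawW G e).ncard :=
            Set.ncard_union_le _ _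
      _ ≤ 2 * k + k * k := by
            exact Nat.add_le_add hEPU (le_trans (aux_biUnion_le F _) hWb)
      _ = k ^ 2 + 2 * k := by ring
  -- part (iii)
  have hsub3 : {x : V | InC4 G x} ⊆
      (⋃ e ∈ F, {x : V | x ∈ e}) ∪ ⋃ e ∈ F, c4DV G e := by
    have key : ∀ a b c d : V, IsInducedC4 G a b c d →
        a ∈ (⋃ e ∈ F, {x : V | x ∈ e}) ∪ ⋃ e ∈ F, c4DV G e := by
      intro a b c d h
      rcases c4_pair_mem hPI h with hm | hm
      · exact Or.inl (Set.mem_biUnion hm (Sym2.mem_mk_left a c))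
      · exact Or.inr (Set.mem_biUnion hm
          ⟨s(c, a), ⟨b, d, c, a, rfl, rfl, c4_rot h⟩, Sym2.mem_mk_right c a⟩)
    rintro x ⟨a, b, c, d, h, rfl | rfl | rfl | rfl⟩
    · exact key x b c d h
    · exact key x c d a (c4_rot h)
    · exact key x d a b (c4_rot (c4_rot h))
    · exact key x a b c (c4_rot (c4_rot (c4_rot h)))
  have hDVb : ∑ e ∈ F, (c4DV G e).ncard ≤ k * (2 * k) := by
    have h : ∑ e ∈ F, (c4DV G e).ncard ≤ ∑ _e ∈ F, 2 * k :=
      Finset.sum_le_sum (fun e he => by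
        obtain ⟨u, v, rfl, hu, hn⟩ := hrep e he
        exact c4DV_le hred hu hn)
    rw [Finset.sum_const, smul_eq_mul] at h
    exact h.trans (Nat.mul_le_mul hFcard le_rfl)
  have part3 : {x : V | InC4 G x}.ncard ≤ 2 * k ^ 2 + 2 * k := by
    calc _ ≤ ((⋃ e ∈ F, {x : V | x ∈ e}) ∪ ⋃ e ∈ F, c4DV G e).ncard :=
            Set.ncard_le_ncard hsub3 (Set.toFinite _)
      _ ≤ (⋃ e ∈ F, {x : V | x ∈ e}).ncard + (⋃ e ∈ F, c4DV G e).ncard :=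
            Set.ncard_union_le _ _
      _ ≤ 2 * k + k * (2 * k) :=
            Nat.add_le_add hEPU (le_trans (aux_biUnion_le F _) hDVb)
      _ = 2 * k ^ 2 + 2 * k := by ring
  exact ⟨part1, part2, part3⟩
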